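/- Let the potential be W(x) = x (so ∂ₓW ≡ 1). Define on ℝ² the primitive fields ρ(x,t) = 2 + sin(2π(x − t)), v₁ ≡ 1, v₂ ≡ 0, p₁₁(x,t) = 5 + t − x + cos(2π(x − t))/(4π), p₁₂ ≡ 0, p₂₂ ≡ 1, and let u(x,t) ∈ ℝ⁶ be the corresponding conserved state. Then u is a classical solution of the 1-D Ten-Moment system with source: ∂ₜu(x,t) + ∂ₓ f(u(x,t)) = s(u(x,t)) for all (x,t) ∈ ℝ². -/

import Mathlib

noncomputable section

/-- Density of a Ten-Moment state. -/
def rho (u : Fin 6 → ℝ) : ℝ := u 0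

/-- First velocity component. -/
def v1 (u : Fin 6 → ℝ) : ℝ := u 1 / u 0

/-- Second velocity component. -/
def v2 (u : Fin 6 → ℝ) : ℝ := u 2 / u 0

/-- Pressure component `p₁₁`. -/
def p11 (u : Fin 6 → ℝ) : ℝ := 2 * u 3 - (u 1) ^ 2 / u 0

/-- Pressure component `p₁₂`. -/
def p12 (u : Fin 6 → ℝ) : ℝ := 2 * u 4 - u 1 * u 2 / u 0

/-- Pressure component `p₂₂`. -/
def p22 (u : Fin 6 → ℝ) : ℝ := 2 * u 5 - (u 2) ^ 2 / u 0

/-- The admissible set: positive density and positive definite pressure tensor. -/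
def Uad : Set (Fin 6 → ℝ) :=
  {u | 0 < rho u ∧ 0 < p11 u ∧ 0 < p11 u * p22 u - (p12 u) ^ 2}

/-- The x-direction flux of the Ten-Moment system. -/
def fluxX (u : Fin 6 → ℝ) : Fin 6 → ℝ :=
  ![rho u * v1 u,
    rho u * (v1 u) ^ 2 + p11 u,
    rho u * v1 u * v2 u + p12 u,
    (u 3 + p11 u) * v1 u,
    u 4 * v1 u + (p11 u * v2 u + p12 u * v1 u) / 2,
    u 5 * v1 u + p12 u * v2 u]

/-- The maximal wave speed in the x-direction. -/
def alphaX (u : Fin 6 → ℝ) : ℝ := |v1 u| + Real.sqrt (3 * p11 u / rho u)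

/-- The conserved state corresponding to given primitive variables. -/
def consState (r w1 w2 q11 q12 q22 : ℝ) : Fin 6 → ℝ :=
  ![r, r * w1, r * w2, (q11 + r * w1 ^ 2) / 2, (q12 + r * w1 * w2) / 2, (q22 + r * w2 ^ 2) / 2]

/-- The 1-D body-force source term for a given value `d = ∂ₓW` of the potential
gradient. -/
def src (d : ℝ) (u : Fin 6 → ℝ) : Fin 6 → ℝ :=
  ![0, -(rho u * d) / 2, 0, -(rho u * v1 u * d) / 2, -(rho u * v2 u * d) / 4, 0]

private lemma cons_val_five {α : Type*} (a b c d e f : α) :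
    ![a, b, c, d, e, f] 5 = f := rfl

private lemma hd_eq {f : ℝ → ℝ} {a b x : ℝ} (h : HasDerivAt f a x) (e : a = b) :
    HasDerivAt f b x := e ▸ h

private lemma consState_eq (r q : ℝ) :
    consState r 1 0 q 0 1 = ![r, r, 0, (q + r) / 2, 0, 1 / 2] := by
  funext i; fin_cases i <;> simp [consState] <;> ring

private lemma flux_eq (r q : ℝ) (hr : r ≠ 0) :
    fluxX (consState r 1 0 q 0 1) = ![r, r + q, 0, (q + r) / 2 + q, 0, 1 / 2] := by
  funext i
  fin_cases i <;>
    simp [fluxX, consState, rho, v1, v2, p11, p12, p22, Matrix.cons_val_succ, cons_val_five, hr] <;>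
    field_simp <;> ring

private lemma src_eq (r q : ℝ) (hr : r ≠ 0) :
    src 1 (consState r 1 0 q 0 1) = ![0, -r / 2, 0, -r / 2, 0, 0] := by
  funext i
  fin_cases i <;>
    simp [src, consState, rho, v1, v2] <;> field_simp <;> ring

open Real in
/-- With the potential `W(x) = x` (so `∂ₓW ≡ 1`), the fields
`ρ = 2 + sin(2π(x−t))`, `v₁ ≡ 1`, `v₂ ≡ 0`,
`p₁₁ = 5 + t − x + cos(2π(x−t))/(4π)`, `p₁₂ ≡ 0`, `p₂₂ ≡ 1`
form a classical solution of the 1-D Ten-Moment system with source: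
`∂ₜu + ∂ₓ f(u) = s(u)`. -/
theorem source_exact_solution_time_independent :
    ∀ x t : ℝ, ∃ ut ux : Fin 6 → ℝ,
      HasDerivAt (fun s : ℝ => consState (2 + sin (2 * π * (x - s))) 1 0
        (5 + s - x + cos (2 * π * (x - s)) / (4 * π)) 0 1) ut t ∧
      HasDerivAt (fun y : ℝ => fluxX (consState (2 + sin (2 * π * (y - t))) 1 0
        (5 + t - y + cos (2 * π * (y - t)) / (4 * π)) 0 1)) ux x ∧
      ut + ux = src 1 (consState (2 + sin (2 * π * (x - t))) 1 0
        (5 + t - x + cos (2 * π * (x - t)) / (4 * π)) 0 1) := by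
  intro x t
  set θ : ℝ := 2 * π * (x - t) with hθ
  have hlin_t : HasDerivAt (fun s : ℝ => 2 * π * (x - s)) (2 * π * (-1)) t :=
    ((hasDerivAt_id t).const_sub x).const_mul (2 * π)
  have hlin_x : HasDerivAt (fun y : ℝ => 2 * π * (y - t)) (2 * π * 1) x :=
    ((hasDerivAt_id x).sub_const t).const_mul (2 * π)
  have hρt : HasDerivAt (fun s : ℝ => 2 + sin (2 * π * (x - s))) (-(2 * π) * cos θ) t := by
    refine hd_eq (hlin_t.sin.const_add 2) ?_
    rw [hθ]; ring
  have hρx : HasDerivAt (fun y : ℝ => 2 + sin (2 * π * (y - t))) (2 * π * cos θ) x := by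
    refine hd_eq (hlin_x.sin.const_add 2) ?_
    rw [hθ]; ring
  have hqt : HasDerivAt (fun s : ℝ => 5 + s - x + cos (2 * π * (x - s)) / (4 * π))
      (1 + sin θ / 2) t := by
    have h1 : HasDerivAt (fun s : ℝ => 5 + s - x) 1 t := by
      simpa using ((hasDerivAt_id t).const_add 5).sub_const x
    have h2 := hlin_t.cos.div_const (4 * π)
    refine hd_eq (h1.add h2) ?_
    rw [hθ]; field_simp; ring
  have hqx : HasDerivAt (fun y : ℝ => 5 + t - y + cos (2 * π * (y - t)) / (4 * π))
      (-1 - sin θ / 2) x := by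
    have h1 : HasDerivAt (fun y : ℝ => 5 + t - y) (-1) x := by
      simpa using (hasDerivAt_id x).const_sub (5 + t)
    have h2 := hlin_x.cos.div_const (4 * π)
    refine hd_eq (h1.add h2) ?_
    rw [hθ]; field_simp; ring
  have hrne : ∀ y : ℝ, (2 + sin (2 * π * (y - t))) ≠ 0 := fun y => by
    nlinarith [Real.neg_one_le_sin (2 * π * (y - t))]
  refine ⟨![-(2 * π) * cos θ, -(2 * π) * cos θ, 0,
        ((1 + sin θ / 2) + -(2 * π) * cos θ) / 2, 0, 0],
      ![2 * π * cos θ, 2 * π * cos θ + (-1 - sin θ / 2), 0,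
        ((-1 - sin θ / 2) + 2 * π * cos θ) / 2 + (-1 - sin θ / 2), 0, 0],
      ?_, ?_, ?_⟩
  · have he : (fun s : ℝ => consState (2 + sin (2 * π * (x - s))) 1 0
        (5 + s - x + cos (2 * π * (x - s)) / (4 * π)) 0 1)
        = fun s : ℝ => ![2 + sin (2 * π * (x - s)), 2 + sin (2 * π * (x - s)), 0,
            ((5 + s - x + cos (2 * π * (x - s)) / (4 * π)) + (2 + sin (2 * π * (x - s)))) / 2,
            0, 1 / 2] := funext fun s => consState_eq _ _
    rw [he, hasDerivAt_pi]
    intro i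
    fin_cases i <;> simp only [Matrix.cons_val_zero, Matrix.cons_val_one, Matrix.head_cons,
      Matrix.cons_val_two, Matrix.tail_cons, Matrix.cons_val_three, Matrix.cons_val_four,
      Matrix.cons_val_succ, Fin.mk_zero, Fin.mk_one]
    · exact hρt
    · exact hρt
    · exact hasDerivAt_const _ _
    · exact (hqt.add hρt).div_const 2
    · exact hasDerivAt_const _ _
    · exact hasDerivAt_const _ _
  · have he : (fun y : ℝ => fluxX (consState (2 + sin (2 * π * (y - t))) 1 0
        (5 + t - y + cos (2 * π * (y - t)) / (4 * π)) 0 1))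
        = fun y : ℝ => ![2 + sin (2 * π * (y - t)),
            (2 + sin (2 * π * (y - t))) + (5 + t - y + cos (2 * π * (y - t)) / (4 * π)), 0,
            ((5 + t - y + cos (2 * π * (y - t)) / (4 * π)) + (2 + sin (2 * π * (y - t)))) / 2
              + (5 + t - y + cos (2 * π * (y - t)) / (4 * π)),
            0, 1 / 2] := funext fun y => flux_eq _ _ (hrne y)
    rw [he, hasDerivAt_pi]
    intro i
    fin_cases i <;> simp only [Matrix.cons_val_zero, Matrix.cons_val_one, Matrix.head_cons,
      Matrix.cons_val_two, Matrix.tail_cons, Matrix.cons_val_three, Matrix.cons_val_four,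
      Matrix.cons_val_succ, Fin.mk_zero, Fin.mk_one]
    · exact hρx
    · exact hρx.add hqx
    · exact hasDerivAt_const _ _
    · exact ((hqx.add hρx).div_const 2).add hqx
    · exact hasDerivAt_const _ _
    · exact hasDerivAt_const _ _
  · rw [src_eq _ _ (hrne x)]
    funext i
    fin_cases i <;>
      simp [Pi.add_apply, hθ, Matrix.cons_val_succ, cons_val_five] <;> ring
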